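/- For 0 < q < p ≤ 1, n ≥ 1, and any convex function f : [0,1] → ℝ, the revised (p,q)-Bernstein operator satisfies B_{n,p,q}(f; x) ≥ f(x) for all x ∈ [0,1]. -/

import Mathlib

open Finset

noncomputable def pqInt (p q : ℝ) (m : ℕ) : ℝ := (p ^ m - q ^ m) / (p - q)

noncomputable def pqFact (p q : ℝ) (m : ℕ) : ℝ := ∏ j ∈ Finset.Icc 1 m, pqInt p q j

noncomputable def pqChoose (p q : ℝ) (n k : ℕ) : ℝ :=
  pqFact p q n / (pqFact p q k * pqFact p q (n - k))

/-- The sample node `[k]_{p,q}/(p^{k-n}[n]_{p,q}) = p^{n-k}[k]_{p,q}/[n]_{p,q}`. -/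
noncomputable def pqNode (p q : ℝ) (n k : ℕ) : ℝ :=
  p ^ (n - k) * pqInt p q k / pqInt p q n

/-- Basis function `b_{n,k}(x)` of the revised (p,q)-Bernstein operator. -/
noncomputable def pqBasis (p q : ℝ) (n k : ℕ) (x : ℝ) : ℝ :=
  (p ^ (n * (n - 1) / 2))⁻¹ * pqChoose p q n k * p ^ (k * (k - 1) / 2) * x ^ k *
    ∏ s ∈ Finset.range (n - k), (p ^ s - q ^ s * x)

/-- The revised (p,q)-Bernstein operator. -/
noncomputable def pqBern (p q : ℝ) (n : ℕ) (f : ℝ → ℝ) (x : ℝ) : ℝ :=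
  ∑ k ∈ Finset.range (n + 1), pqBasis p q n k x * f (pqNode p q n k)

section Aux

variable {p q : ℝ}

lemma pqInt_pos (hq : 0 < q) (hqp : q < p) {m : ℕ} (hm : 1 ≤ m) : 0 < pqInt p q m := by
  have : q ^ m < p ^ m := pow_lt_pow_left₀ hqp hq.le (by omega)
  exact div_pos (sub_pos.2 this) (sub_pos.2 hqp)

lemma pqInt_zero : pqInt p q 0 = 0 := by simp [pqInt]

lemma pqFact_pos (hq : 0 < q) (hqp : q < p) (m : ℕ) : 0 < pqFact p q m :=
  Finset.prod_pos fun j hj => pqInt_pos hq hqp (mem_Icc.1 hj).1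

lemma pqFact_succ (m : ℕ) : pqFact p q (m+1) = pqFact p q m * pqInt p q (m+1) := by
  unfold pqFact
  rw [Finset.prod_Icc_succ_top (by omega)]

lemma pqFact_zero : pqFact p q 0 = 1 := by simp [pqFact]

lemma pqChoose_pos (hq : 0 < q) (hqp : q < p) (n k : ℕ) : 0 < pqChoose p q n k :=
  div_pos (pqFact_pos hq hqp _) (mul_pos (pqFact_pos hq hqp _) (pqFact_pos hq hqp _))

lemma pqChoose_zero_right (hq : 0 < q) (hqp : q < p) (n : ℕ) : pqChoose p q n 0 = 1 := by
  unfold pqChoose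
  rw [pqFact_zero, Nat.sub_zero, one_mul, div_self (pqFact_pos hq hqp n).ne']

lemma pqChoose_self (hq : 0 < q) (hqp : q < p) (n : ℕ) : pqChoose p q n n = 1 := by
  unfold pqChoose
  rw [Nat.sub_self, pqFact_zero, mul_one, div_self (pqFact_pos hq hqp n).ne']

lemma pqInt_add (hqp : q < p) (j m : ℕ) :
    pqInt p q (j+m+2) = p^(j+1) * pqInt p q (m+1) + q^(m+1) * pqInt p q (j+1) := by
  unfold pqInt
  have h : p - q ≠ 0 := sub_ne_zero.2 hqp.ne'
  field_simp
  ring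

lemma pascal (hq : 0 < q) (hqp : q < p) (j m : ℕ) :
    pqChoose p q (j+m+2) (j+1)
      = p^(j+1) * pqChoose p q (j+m+1) (j+1) + q^(m+1) * pqChoose p q (j+m+1) j := by
  unfold pqChoose
  rw [show j+m+2-(j+1) = m+1 by omega, show j+m+1-(j+1) = m by omega,
    show j+m+1-j = m+1 by omega, show j+m+2 = (j+m+1)+1 by ring, pqFact_succ (j+m+1),
    pqFact_succ j, pqFact_succ m, pqInt_add hqp j m]
  have h1 := (pqFact_pos hq hqp (j+m+1)).ne'
  have h2 := (pqFact_pos hq hqp j).ne'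
  have h3 := (pqFact_pos hq hqp m).ne'
  have h4 := (pqInt_pos hq hqp (show 1 ≤ j+1 by omega)).ne'
  have h5 := (pqInt_pos hq hqp (show 1 ≤ m+1 by omega)).ne'
  field_simp

lemma pascal' (hq : 0 < q) (hqp : q < p) {n j : ℕ} (h : j < n) :
    pqChoose p q (n+1) (j+1) = p^(j+1) * pqChoose p q n (j+1) + q^(n-j) * pqChoose p q n j := by
  obtain ⟨m, rfl⟩ : ∃ m, n = j + m + 1 := ⟨n - j - 1, by omega⟩
  rw [show j+m+1+1 = j+m+2 by ring, show j+m+1-j = m+1 by omega]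
  exact pascal hq hqp j m

lemma choose_mul_int (hq : 0 < q) (hqp : q < p) (j m : ℕ) :
    pqChoose p q (j+m+1) (j+1) * pqInt p q (j+1)
      = pqInt p q (j+m+1) * pqChoose p q (j+m) j := by
  unfold pqChoose
  rw [show j+m+1-(j+1) = m by omega, show j+m-j = m by omega,
    show j+m+1 = (j+m)+1 by ring, pqFact_succ (j+m), pqFact_succ j]
  have h1 := (pqFact_pos hq hqp (j+m)).ne'
  have h2 := (pqFact_pos hq hqp j).ne'
  have h3 := (pqFact_pos hq hqp m).ne'
  have h4 := (pqInt_pos hq hqp (show 1 ≤ j+1 by omega)).ne'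
  have h5 := (pqInt_pos hq hqp (show 1 ≤ j+m+1 by omega)).ne'
  field_simp

lemma choose_mul_int' (hq : 0 < q) (hqp : q < p) {j m : ℕ} (h : j ≤ m) :
    pqChoose p q (m+1) (j+1) * pqInt p q (j+1) = pqInt p q (m+1) * pqChoose p q m j := by
  obtain ⟨l, rfl⟩ : ∃ l, m = j + l := ⟨m - j, by omega⟩
  exact choose_mul_int hq hqp j l

lemma tri_succ (j : ℕ) : (j+1)*((j+1)-1)/2 = j*(j-1)/2 + j := by
  rw [show (j+1)*((j+1)-1)/2 = (j+1).choose 2 from (Nat.choose_two_right _).symm,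
    show j*(j-1)/2 = j.choose 2 from (Nat.choose_two_right _).symm,
    Nat.choose_succ_succ, Nat.choose_one_right, add_comm]

lemma sum_one (hq : 0 < q) (hqp : q < p) (x : ℝ) (n : ℕ) :
    ∑ k ∈ range (n+1), pqChoose p q n k * p ^ (k*(k-1)/2) * x ^ k *
      ∏ s ∈ range (n - k), (p ^ s - q ^ s * x) = p ^ (n*(n-1)/2) := by
  induction n with
  | zero => simp [pqChoose_self hq hqp]
  | succ n ih =>
    rw [Finset.sum_range_succ', Finset.sum_range_succ]
    have hsplit : (∑ j ∈ Finset.range n,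
          pqChoose p q (n + 1) (j + 1) * p ^ ((j + 1) * (j + 1 - 1) / 2) * x ^ (j + 1) *
            ∏ s ∈ Finset.range (n + 1 - (j + 1)), (p ^ s - q ^ s * x))
        = (∑ j ∈ Finset.range n, p^(j+1) * pqChoose p q n (j+1) * p ^ ((j+1) * (j+1-1)/2) * x^(j+1) *
            ∏ s ∈ Finset.range (n - j), (p ^ s - q ^ s * x))
          + ∑ j ∈ Finset.range n, q^(n-j) * pqChoose p q n j * p ^ ((j+1) * (j+1-1)/2) * x^(j+1) *
            ∏ s ∈ Finset.range (n - j), (p ^ s - q ^ s * x) := by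
      rw [← Finset.sum_add_distrib]
      apply Finset.sum_congr rfl; intro j hj
      rw [pascal' hq hqp (mem_range.mp hj), show n+1-(j+1) = n-j by omega]
      ring
    have hA : (∑ j ∈ Finset.range n, p^(j+1) * pqChoose p q n (j+1) * p ^ ((j+1)*(j+1-1)/2) * x^(j+1) *
            ∏ s ∈ Finset.range (n - j), (p ^ s - q ^ s * x))
          + pqChoose p q (n + 1) 0 * p ^ (0 * (0 - 1) / 2) * x ^ 0 * ∏ s ∈ Finset.range (n + 1 - 0), (p ^ s - q ^ s * x)
        = ∑ k ∈ Finset.range (n+1), p^k * pqChoose p q n k * p ^ (k*(k-1)/2) * x^k * ∏ s ∈ Finset.range (n+1-k), (p^s - q^s*x) := by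
      rw [Finset.sum_range_succ']
      congr 1
      · apply Finset.sum_congr rfl; intro j hj; rw [show n+1-(j+1) = n-j by omega]
      · norm_num [pqChoose_zero_right hq hqp]
    have hB : (∑ j ∈ Finset.range n, q^(n-j) * pqChoose p q n j * p ^ ((j+1)*(j+1-1)/2) * x^(j+1) *
            ∏ s ∈ Finset.range (n - j), (p ^ s - q ^ s * x))
          + pqChoose p q (n + 1) (n + 1) * p ^ ((n + 1) * (n + 1 - 1) / 2) * x ^ (n + 1) *
            ∏ s ∈ Finset.range (n + 1 - (n + 1)), (p ^ s - q ^ s * x)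
        = ∑ k ∈ Finset.range (n+1), q^(n-k) * x * (p^k * pqChoose p q n k * p ^ (k*(k-1)/2) * x^k * ∏ s ∈ Finset.range (n-k), (p^s - q^s*x)) := by
      rw [Finset.sum_range_succ]
      congr 1
      · apply Finset.sum_congr rfl; intro j hj
        rw [tri_succ j, pow_add]; ring
      · rw [pqChoose_self hq hqp, pqChoose_self hq hqp, tri_succ n, pow_add, Nat.sub_self, Nat.sub_self]
        norm_num; ring
    have hkey : ∀ k ∈ Finset.range (n+1),
        (p^k * pqChoose p q n k * p ^ (k*(k-1)/2) * x^k * ∏ s ∈ Finset.range (n+1-k), (p^s - q^s*x))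
        + q^(n-k) * x * (p^k * pqChoose p q n k * p ^ (k*(k-1)/2) * x^k * ∏ s ∈ Finset.range (n-k), (p^s - q^s*x))
        = p^n * (pqChoose p q n k * p ^ (k*(k-1)/2) * x^k * ∏ s ∈ Finset.range (n-k), (p^s - q^s*x)) := by
      intro k hk
      have hk' : k ≤ n := Nat.lt_succ_iff.mp (mem_range.mp hk)
      rw [show n+1-k = (n-k)+1 by omega, Finset.prod_range_succ,
        show p^n = p^k * p^(n-k) by rw [← pow_add]; congr 1; omega]
      ring
    have hfin : (∑ k ∈ Finset.range (n+1), p^k * pqChoose p q n k * p ^ (k*(k-1)/2) * x^k * ∏ s ∈ Finset.range (n+1-k), (p^s - q^s*x))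
        + (∑ k ∈ Finset.range (n+1), q^(n-k) * x * (p^k * pqChoose p q n k * p ^ (k*(k-1)/2) * x^k * ∏ s ∈ Finset.range (n-k), (p^s - q^s*x)))
        = p^n * p^(n*(n-1)/2) := by
      rw [← Finset.sum_add_distrib, Finset.sum_congr rfl hkey, ← Finset.mul_sum, ih]
    rw [hsplit]
    conv_rhs => rw [tri_succ n, pow_add]
    linarith [hA, hB, hfin]

lemma sum_node (hq : 0 < q) (hqp : q < p) (x : ℝ) (m : ℕ) :
    ∑ k ∈ range (m+2), pqChoose p q (m+1) k * p^(k*(k-1)/2) * x^k *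
      (∏ s ∈ range (m+1-k), (p^s - q^s*x)) * pqNode p q (m+1) k
      = p^((m+1)*((m+1)-1)/2) * x := by
  rw [Finset.sum_range_succ']
  have h0 : pqNode p q (m+1) 0 = 0 := by simp [pqNode, pqInt_zero]
  rw [h0, mul_zero, add_zero]
  have hterm : ∀ j ∈ range (m+1),
      pqChoose p q (m+1) (j+1) * p^((j+1)*((j+1)-1)/2) * x^(j+1) *
        (∏ s ∈ range (m+1-(j+1)), (p^s - q^s*x)) * pqNode p q (m+1) (j+1)
      = (p^m * x) * (pqChoose p q m j * p^(j*(j-1)/2) * x^j * ∏ s ∈ range (m-j), (p^s - q^s*x)) := by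
    intro j hj
    have hj' : j ≤ m := Nat.lt_succ_iff.mp (mem_range.mp hj)
    have hne : pqInt p q (m+1) ≠ 0 := (pqInt_pos hq hqp (by omega)).ne'
    have hcm := choose_mul_int' hq hqp hj'
    unfold pqNode
    rw [show m+1-(j+1) = m-j by omega]
    calc pqChoose p q (m+1) (j+1) * p^((j+1)*((j+1)-1)/2) * x^(j+1) *
          (∏ s ∈ range (m-j), (p^s - q^s*x)) * (p^(m-j) * pqInt p q (j+1) / pqInt p q (m+1))
        = (pqChoose p q (m+1) (j+1) * pqInt p q (j+1)) *
            (p^((j+1)*((j+1)-1)/2) * x^(j+1) * (∏ s ∈ range (m-j), (p^s - q^s*x)) * p^(m-j))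
            / pqInt p q (m+1) := by ring
      _ = (pqInt p q (m+1) * pqChoose p q m j) *
            (p^((j+1)*((j+1)-1)/2) * x^(j+1) * (∏ s ∈ range (m-j), (p^s - q^s*x)) * p^(m-j))
            / pqInt p q (m+1) := by rw [hcm]
      _ = pqChoose p q m j *
            (p^((j+1)*((j+1)-1)/2) * x^(j+1) * (∏ s ∈ range (m-j), (p^s - q^s*x)) * p^(m-j)) := by
          field_simp
          ring
      _ = (p^m * x) * (pqChoose p q m j * p^(j*(j-1)/2) * x^j * ∏ s ∈ range (m-j), (p^s - q^s*x)) := by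
          rw [tri_succ j, pow_add, show p^m = p^j * p^(m-j) by rw [← pow_add]; congr 1; omega]
          ring
  rw [Finset.sum_congr rfl hterm, ← Finset.mul_sum, sum_one hq hqp x m, tri_succ m, pow_add]
  ring

lemma pqBasis_nonneg (hq : 0 < q) (hqp : q < p) {n k : ℕ} {x : ℝ}
    (hx : x ∈ Set.Icc (0:ℝ) 1) : 0 ≤ pqBasis p q n k x := by
  have hp : 0 < p := hq.trans hqp
  obtain ⟨hx0, hx1⟩ := hx
  unfold pqBasis
  have h1 : (0:ℝ) ≤ (p ^ (n * (n - 1) / 2))⁻¹ := by positivity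
  have h2 : (0:ℝ) ≤ ∏ s ∈ Finset.range (n - k), (p ^ s - q ^ s * x) := by
    apply Finset.prod_nonneg
    intro s _
    have : q ^ s * x ≤ q ^ s := by
      nlinarith [pow_pos hq s]
    have hqs : q ^ s ≤ p ^ s := pow_le_pow_left₀ hq.le hqp.le s
    linarith
  have h3 := (pqChoose_pos hq hqp n k).le
  positivity

lemma pqNode_mem (hq : 0 < q) (hqp : q < p) {n k : ℕ} (hn : 1 ≤ n) (hk : k ≤ n) :
    pqNode p q n k ∈ Set.Icc (0:ℝ) 1 := by
  have hp : 0 < p := hq.trans hqp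
  have hInt : 0 < pqInt p q n := pqInt_pos hq hqp hn
  constructor
  · apply div_nonneg _ hInt.le
    apply mul_nonneg (by positivity)
    rcases Nat.eq_zero_or_pos k with hk0 | hk0
    · simp [hk0, pqInt_zero]
    · exact (pqInt_pos hq hqp hk0).le
  · unfold pqNode
    rw [div_le_one hInt]
    have key : p^(n-k) * (p^k - q^k) ≤ p^n - q^n := by
      have h1 : p^(n-k) * p^k = p^n := by rw [← pow_add]; congr 1; omega
      have h2 : q^(n-k) * q^k = q^n := by rw [← pow_add]; congr 1; omega
      have h3 : q^(n-k) ≤ p^(n-k) := pow_le_pow_left₀ hq.le hqp.le _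
      nlinarith [pow_pos hq k]
    unfold pqInt
    rw [show p ^ (n - k) * ((p ^ k - q ^ k) / (p - q)) = (p ^ (n-k) * (p ^ k - q ^ k)) / (p - q) by ring]
    exact div_le_div_of_nonneg_right key (sub_pos.2 hqp).le

end Aux

theorem pqBern_convex (p q : ℝ) (n : ℕ) (hn : 1 ≤ n)
    (hq : 0 < q) (hqp : q < p) (hp : p ≤ 1) (f : ℝ → ℝ)
    (hf : ConvexOn ℝ (Set.Icc (0:ℝ) 1) f) (x : ℝ) (hx : x ∈ Set.Icc (0:ℝ) 1) :
    f x ≤ pqBern p q n f x := by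
  have hp0 : 0 < p := hq.trans hqp
  obtain ⟨m, rfl⟩ : ∃ m, n = m + 1 := ⟨n - 1, by omega⟩
  have hpT : (0:ℝ) < p ^ ((m+1) * ((m+1)-1) / 2) := by positivity
  have hw0 : ∀ k ∈ range (m+2), 0 ≤ pqBasis p q (m+1) k x :=
    fun k _ => pqBasis_nonneg hq hqp hx
  have hws : ∑ k ∈ range (m+2), pqBasis p q (m+1) k x = 1 := by
    calc ∑ k ∈ range (m+2), pqBasis p q (m+1) k x
        = (p ^ ((m+1) * ((m+1)-1) / 2))⁻¹ * ∑ k ∈ range (m+2),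
            (pqChoose p q (m+1) k * p ^ (k*(k-1)/2) * x^k *
              ∏ s ∈ range (m+1-k), (p^s - q^s*x)) := by
          rw [Finset.mul_sum]
          apply Finset.sum_congr rfl; intro k _
          unfold pqBasis; ring
      _ = 1 := by
          rw [sum_one hq hqp x (m+1), inv_mul_cancel₀ hpT.ne']
  have hnode : ∑ k ∈ range (m+2), pqBasis p q (m+1) k x • pqNode p q (m+1) k = x := by
    calc ∑ k ∈ range (m+2), pqBasis p q (m+1) k x • pqNode p q (m+1) k
        = (p ^ ((m+1) * ((m+1)-1) / 2))⁻¹ * ∑ k ∈ range (m+2),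
            (pqChoose p q (m+1) k * p ^ (k*(k-1)/2) * x^k *
              (∏ s ∈ range (m+1-k), (p^s - q^s*x)) * pqNode p q (m+1) k) := by
          rw [Finset.mul_sum]
          apply Finset.sum_congr rfl; intro k _
          rw [smul_eq_mul]; unfold pqBasis; ring
      _ = x := by
          rw [sum_node hq hqp x m, ← mul_assoc, inv_mul_cancel₀ hpT.ne', one_mul]
  have hmem : ∀ k ∈ range (m+2), pqNode p q (m+1) k ∈ Set.Icc (0:ℝ) 1 :=
    fun k hk => pqNode_mem hq hqp (by omega) (Nat.lt_succ_iff.mp (mem_range.mp hk))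
  have h := hf.map_sum_le hw0 hws hmem
  rw [hnode] at h
  unfold pqBern
  simpa [smul_eq_mul] using h
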